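/- Let P(λ) = ∑_{i=0}^{k} A_i λ^i be an n×n complex matrix polynomial of odd degree k ≥ 3 with A_0 ≠ 0, let δ ∈ ℂ be nonzero, and let z ∈ ℂ^{kn} be nonzero. Write 𝒯_P(λ) = λ𝒯₁ − 𝒯₀ and 𝒯_{rev P}(λ) = λ𝒯̃₁ − 𝒯̃₀. Then η_{𝒯_P}(z, δ) = η_{𝒯_{rev P}}(R D z, 1/δ); that is, ‖𝒯_P(δ)z‖₂ / ((|δ| ‖𝒯₁‖₂ + ‖𝒯₀‖₂) ‖z‖₂) = ‖𝒯_{rev P}(1/δ)(R D z)‖₂ / ((|1/δ| ‖𝒯̃₁‖₂ + ‖𝒯̃₀‖₂) ‖R D z‖₂). -/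

import Mathlib

open Finset Matrix

noncomputable section
namespace MPoly

abbrev Mat (n : ℕ) := Matrix (Fin n) (Fin n) ℂ

variable {n : ℕ}

/-- Euclidean norm of a complex vector. -/
def vecNorm {ι : Type*} [Fintype ι] (x : ι → ℂ) : ℝ :=
  Real.sqrt (∑ i, ‖x i‖ ^ 2)

/-- Spectral norm (operator norm induced by the Euclidean vector norm). -/
def specNorm {ι κ : Type*} [Fintype ι] [Fintype κ] [DecidableEq κ] (M : Matrix ι κ ℂ) : ℝ :=
  ‖LinearMap.toContinuousLinearMap (Matrix.toEuclideanLin M)‖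

/-- Evaluation of the matrix polynomial `P(λ) = ∑_{i=0}^k A_i λ^i`. -/
def Peval (k : ℕ) (A : ℕ → Mat n) (lam : ℂ) : Mat n :=
  ∑ i ∈ Finset.range (k + 1), lam ^ i • A i

/-- Derivative `P′(λ) = ∑_{i=1}^k i A_i λ^{i-1}`. -/
def Pderiv (k : ℕ) (A : ℕ → Mat n) (lam : ℂ) : Mat n :=
  ∑ i ∈ Finset.range k, (((i : ℂ) + 1) * lam ^ i) • A (i + 1)

/-- `i`-th Horner shift `P_i(λ) = ∑_{j=0}^i λ^j A_{k-i+j}`. -/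
def horner (k : ℕ) (A : ℕ → Mat n) (i : ℕ) (lam : ℂ) : Mat n :=
  ∑ j ∈ Finset.range (i + 1), lam ^ j • A (k - i + j)

/-- `P^i(λ) = ∑_{j=0}^i λ^j A_j`. -/
def lowPart (A : ℕ → Mat n) (i : ℕ) (lam : ℂ) : Mat n :=
  ∑ j ∈ Finset.range (i + 1), lam ^ j • A j

/-- `q`-th (0-indexed) block of `Δ(λ)`. -/
def DeltaBlock (k : ℕ) (A : ℕ → Mat n) (lam : ℂ) (q : ℕ) : Mat n :=
  if q % 2 = 0 then lam ^ ((k - 1 - q) / 2) • (1 : Mat n)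
  else lam ^ ((k - q) / 2) • horner k A q lam

/-- The kn×n matrix `Δ(λ)`. -/
def Delta (k : ℕ) (A : ℕ → Mat n) (lam : ℂ) : Matrix (Fin k × Fin n) (Fin n) ℂ :=
  Matrix.of fun p b => DeltaBlock k A lam p.1.1 p.2 b

/-- The n×kn block-transpose `Δᴮ(λ)`. -/
def DeltaB (k : ℕ) (A : ℕ → Mat n) (lam : ℂ) : Matrix (Fin n) (Fin k × Fin n) ℂ :=
  Matrix.of fun a q => DeltaBlock k A lam q.1.1 a q.2

/-- (0-indexed) blocks of `𝒯₁`. -/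
def T1Block (k : ℕ) (A : ℕ → Mat n) (i j : ℕ) : Mat n :=
  if i = j then (if i % 2 = 0 then A (k - i) else 0)
  else if (j = i + 1 ∧ i % 2 = 1) ∨ (i = j + 1 ∧ j % 2 = 1) then 1 else 0

/-- (0-indexed) blocks of `𝒯₀`. -/
def T0Block (k : ℕ) (A : ℕ → Mat n) (i j : ℕ) : Mat n :=
  if i = j then (if i % 2 = 0 then -(A (k - i - 1)) else 0)
  else if (j = i + 1 ∧ i % 2 = 0) ∨ (i = j + 1 ∧ j % 2 = 0) then 1 else 0

/-- `𝒯₁`. -/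
def TT1 (k : ℕ) (A : ℕ → Mat n) : Matrix (Fin k × Fin n) (Fin k × Fin n) ℂ :=
  Matrix.of fun p q => T1Block k A p.1.1 q.1.1 p.2 q.2

/-- `𝒯₀`. -/
def TT0 (k : ℕ) (A : ℕ → Mat n) : Matrix (Fin k × Fin n) (Fin k × Fin n) ℂ :=
  Matrix.of fun p q => T0Block k A p.1.1 q.1.1 p.2 q.2

/-- The pencil `𝒯_P(λ) = λ𝒯₁ - 𝒯₀`. -/
def Tpencil (k : ℕ) (A : ℕ → Mat n) (lam : ℂ) : Matrix (Fin k × Fin n) (Fin k × Fin n) ℂ :=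
  lam • TT1 k A - TT0 k A

/-- Block anti-diagonal flip matrix `R`. -/
def Rmat (k n : ℕ) : Matrix (Fin k × Fin n) (Fin k × Fin n) ℂ :=
  Matrix.of fun p q => if p.1.1 + q.1.1 = k - 1 ∧ p.2 = q.2 then 1 else 0

/-- Block-diagonal sign matrix `S` (block `i` (1-indexed) is `-I` iff `i ≡ 0,1 mod 4`). -/
def Smat (k n : ℕ) : Matrix (Fin k × Fin n) (Fin k × Fin n) ℂ :=
  Matrix.of fun p q =>
    if p = q then (if (p.1.1 + 1) % 4 = 0 ∨ (p.1.1 + 1) % 4 = 1 then -1 else 1) else 0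

/-- `D = diag(I, -I, I, …, I)`. -/
def Dmat (k n : ℕ) : Matrix (Fin k × Fin n) (Fin k × Fin n) ℂ :=
  Matrix.of fun p q => if p = q then ((-1 : ℂ)) ^ p.1.1 else 0

/-- `e_k ⊗ I_n`: kn×n matrix with last block `I_n`. -/
def ekI (k n : ℕ) : Matrix (Fin k × Fin n) (Fin n) ℂ :=
  Matrix.of fun p b => if p.1.1 = k - 1 ∧ p.2 = b then 1 else 0

/-- The pencil `ℛ_P(λ) = S R 𝒯_P(λ) R S`. -/
def Rpencil (k : ℕ) (A : ℕ → Mat n) (lam : ℂ) : Matrix (Fin k × Fin n) (Fin k × Fin n) ℂ :=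
  Smat k n * Rmat k n * Tpencil k A lam * Rmat k n * Smat k n

/-- `max_{i=0:k} ‖A_i‖₂`. -/
def maxA (k : ℕ) (A : ℕ → Mat n) : ℝ :=
  (Finset.range (k + 1)).sup' Finset.nonempty_range_add_one fun i => specNorm (A i)

/-- `max_{i=0:k} max{1, ‖A_i‖₂}`. -/
def maxA1 (k : ℕ) (A : ℕ → Mat n) : ℝ :=
  (Finset.range (k + 1)).sup' Finset.nonempty_range_add_one fun i => max 1 (specNorm (A i))

/-- The quantity `d₁(δ)`. -/
def d1 (k : ℕ) (δ : ℂ) : ℝ :=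
  ∑ r ∈ Finset.range ((k - 1) / 2 + 1), ‖δ‖ ^ (2 * r)
    + ∑ r ∈ Finset.Icc 1 ((k - 1) / 2),
        ((k : ℝ) - 2 * r + 1) * ∑ s ∈ Finset.Icc r (k - r), ‖δ‖ ^ (2 * s)

/-- `ρ₁`. -/
def rho1 (k : ℕ) (A : ℕ → Mat n) : ℝ :=
  ((Finset.range (k + 1)).sup' Finset.nonempty_range_add_one fun i => max 1 (specNorm (A i) ^ 3))
    / min (specNorm (A k)) (specNorm (A 0))

/-- `ρ₂`. -/
def rho2 (k : ℕ) (A : ℕ → Mat n) : ℝ :=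
  min (max 1 (specNorm (A k))) (max 1 (specNorm (A 0))) / maxA k A

/-- `ρ′`. -/
def rho' (k : ℕ) (A : ℕ → Mat n) : ℝ :=
  ((Finset.range (k + 1)).sup' Finset.nonempty_range_add_one fun i => max 1 (specNorm (A i) ^ 2))
    / min (specNorm (A k)) (specNorm (A 0))

/-- `det P(λ)` as a polynomial in `λ`. -/
def detPoly (k : ℕ) (A : ℕ → Mat n) : Polynomial ℂ :=
  (∑ i ∈ Finset.range (k + 1), (Polynomial.X : Polynomial ℂ) ^ i • (A i).map Polynomial.C).det

/-- `L₁¹` (leading coefficient of `D₁(λ,P)`). -/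
def D1L1 (k : ℕ) (A : ℕ → Mat n) : Matrix (Fin k × Fin n) (Fin k × Fin n) ℂ :=
  Matrix.of fun p q =>
    (if p.1.1 = 0 ∧ q.1.1 = 0 then A k
     else if 1 ≤ p.1.1 ∧ 1 ≤ q.1.1 ∧ p.1.1 + q.1.1 ≤ k then -(A (k - p.1.1 - q.1.1))
     else 0) p.2 q.2

/-- `L₀¹` (trailing coefficient of `D₁(λ,P)`). -/
def D1L0 (k : ℕ) (A : ℕ → Mat n) : Matrix (Fin k × Fin n) (Fin k × Fin n) ℂ :=
  Matrix.of fun p q =>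
    (if p.1.1 + q.1.1 + 1 ≤ k then -(A (k - 1 - p.1.1 - q.1.1)) else 0) p.2 q.2

/-- `L₁ᵏ` (leading coefficient of `D_k(λ,P)`). -/
def DkL1 (k : ℕ) (A : ℕ → Mat n) : Matrix (Fin k × Fin n) (Fin k × Fin n) ℂ :=
  Matrix.of fun p q =>
    (if k - 1 ≤ p.1.1 + q.1.1 then A (2 * k - 1 - p.1.1 - q.1.1) else 0) p.2 q.2

/-- `L₀ᵏ` (trailing coefficient of `D_k(λ,P)`). -/
def DkL0 (k : ℕ) (A : ℕ → Mat n) : Matrix (Fin k × Fin n) (Fin k × Fin n) ℂ :=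
  Matrix.of fun p q =>
    (if p.1.1 = k - 1 ∧ q.1.1 = k - 1 then -(A 0)
     else if p.1.1 ≤ k - 2 ∧ q.1.1 ≤ k - 2 ∧ k - 2 ≤ p.1.1 + q.1.1
       then A (2 * k - 2 - p.1.1 - q.1.1)
     else 0) p.2 q.2

/-- `X₁` (leading coefficient of the first companion form `C₁(λ)`). -/
def C1X (k : ℕ) (A : ℕ → Mat n) : Matrix (Fin k × Fin n) (Fin k × Fin n) ℂ :=
  Matrix.of fun p q =>
    (if p.1 = q.1 then (if p.1.1 = 0 then A k else (1 : Mat n)) else 0) p.2 q.2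

/-- `Y₁` (trailing coefficient of the first companion form `C₁(λ)`). -/
def C1Y (k : ℕ) (A : ℕ → Mat n) : Matrix (Fin k × Fin n) (Fin k × Fin n) ℂ :=
  Matrix.of fun p q =>
    (if p.1.1 = 0 then -(A (k - 1 - q.1.1))
     else if p.1.1 = q.1.1 + 1 then (1 : Mat n) else 0) p.2 q.2


section Aux15

variable {k n : ℕ}

/-- flip of the block index. -/
def flipP (p : Fin k × Fin n) : Fin k × Fin n :=
  (⟨k - 1 - p.1.1, by have h := p.1.isLt; omega⟩, p.2)

lemma flipP_fst (p : Fin k × Fin n) : (flipP p).1.1 = k - 1 - p.1.1 := rfl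

lemma flipP_flipP (p : Fin k × Fin n) : flipP (flipP p) = p := by
  have h := p.1.isLt
  unfold flipP
  refine Prod.ext (Fin.ext ?_) rfl
  simp only
  omega

lemma eq_flipP {p q : Fin k × Fin n} (h1 : p.1.1 + q.1.1 = k - 1) (h2 : p.2 = q.2) :
    q = flipP p := by
  have hp := p.1.isLt; have hq := q.1.isLt
  refine Prod.ext (Fin.ext ?_) h2.symm
  simp only [flipP]
  omega

lemma neg_one_pow_congr {a b : ℕ} (h : a % 2 = b % 2) : (-1 : ℂ) ^ a = (-1 : ℂ) ^ b := by
  rcases Nat.even_or_odd a with ha | ha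
  · rw [ha.neg_one_pow, (Nat.even_iff.mpr (by have := Nat.even_iff.mp ha; omega)).neg_one_pow]
  · rw [ha.neg_one_pow, (Nat.odd_iff.mpr (by have := Nat.odd_iff.mp ha; omega)).neg_one_pow]

lemma U_apply (p q : Fin k × Fin n) :
    (Rmat k n * Dmat k n) p q =
      if p.1.1 + q.1.1 = k - 1 ∧ p.2 = q.2 then (-1 : ℂ) ^ q.1.1 else 0 := by
  rw [Matrix.mul_apply,
    Finset.sum_eq_single q (fun b _ hb => by simp [Dmat, hb]) (by simp)]
  simp [Rmat, Dmat, ite_mul]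

lemma U_apply_left (p q : Fin k × Fin n) :
    (Rmat k n * Dmat k n) p q = if q = flipP p then (-1 : ℂ) ^ (k - 1 - p.1.1) else 0 := by
  have hp := p.1.isLt; have hq := q.1.isLt
  rw [U_apply]
  by_cases h : q = flipP p
  · subst h
    rw [if_pos ⟨by simp only [flipP]; omega, rfl⟩, if_pos rfl, flipP_fst]
  · rw [if_neg h, if_neg]
    rintro ⟨h1, h2⟩
    exact h (eq_flipP h1 h2)

lemma U_apply_right (p q : Fin k × Fin n) :
    (Rmat k n * Dmat k n) p q = if p = flipP q then (-1 : ℂ) ^ q.1.1 else 0 := by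
  have hp := p.1.isLt; have hq := q.1.isLt
  rw [U_apply]
  by_cases h : p = flipP q
  · subst h
    rw [if_pos ⟨by simp only [flipP]; omega, rfl⟩, if_pos rfl]
  · rw [if_neg h, if_neg]
    rintro ⟨h1, h2⟩
    exact h (eq_flipP (by omega) h2.symm)

lemma U_mulVec (z : Fin k × Fin n → ℂ) (p : Fin k × Fin n) :
    ((Rmat k n * Dmat k n) *ᵥ z) p = (-1 : ℂ) ^ (k - 1 - p.1.1) * z (flipP p) := by
  rw [Matrix.mulVec, dotProduct,
    Finset.sum_eq_single (flipP p) (fun b _ hb => by rw [U_apply_left]; simp [hb]) (by simp)]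
  rw [U_apply_left, if_pos rfl]

lemma U_mulVec_mulVec (hk : Odd k) (z : Fin k × Fin n → ℂ) :
    (Rmat k n * Dmat k n) *ᵥ ((Rmat k n * Dmat k n) *ᵥ z) = z := by
  have hk1 := Nat.odd_iff.mp hk
  funext p
  have hp := p.1.isLt
  rw [U_mulVec, U_mulVec, flipP_flipP, flipP_fst, ← mul_assoc, ← pow_add]
  rw [Even.neg_one_pow (Nat.even_iff.mpr (by omega)), one_mul]

lemma Umul_apply (M : Matrix (Fin k × Fin n) (Fin k × Fin n) ℂ) (p q : Fin k × Fin n) :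
    ((Rmat k n * Dmat k n) * M) p q = (-1 : ℂ) ^ (k - 1 - p.1.1) * M (flipP p) q := by
  rw [Matrix.mul_apply,
    Finset.sum_eq_single (flipP p) (fun b _ hb => by rw [U_apply_left]; simp [hb]) (by simp)]
  rw [U_apply_left, if_pos rfl]

lemma mulU_apply (M : Matrix (Fin k × Fin n) (Fin k × Fin n) ℂ) (p q : Fin k × Fin n) :
    (M * (Rmat k n * Dmat k n)) p q = (-1 : ℂ) ^ q.1.1 * M p (flipP q) := by
  rw [Matrix.mul_apply,
    Finset.sum_eq_single (flipP q) (fun b _ hb => by rw [U_apply_right]; simp [hb]) (by simp)]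
  rw [U_apply_right, if_pos rfl, mul_comm]

lemma conj_apply (M : Matrix (Fin k × Fin n) (Fin k × Fin n) ℂ) (p q : Fin k × Fin n) :
    ((Rmat k n * Dmat k n) * M * (Rmat k n * Dmat k n)) p q
      = (-1 : ℂ) ^ (k - 1 - p.1.1) * ((-1 : ℂ) ^ q.1.1 * M (flipP p) (flipP q)) := by
  rw [mulU_apply, Umul_apply]
  ring

lemma B1 (hk : Odd k) (A : ℕ → Mat n) (i j : ℕ) (hi : i < k) (hj : j < k) :
    T1Block k (fun m => A (k - m)) i j
      = (-1 : ℂ) ^ (i + j + 1) • T0Block k A (k - 1 - i) (k - 1 - j) := by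
  have hk1 := Nat.odd_iff.mp hk
  unfold T1Block T0Block
  by_cases hij : i = j
  · subst hij
    rw [if_pos rfl, if_pos rfl]
    by_cases he : i % 2 = 0
    · rw [if_pos he, if_pos (show (k - 1 - i) % 2 = 0 by omega)]
      simp only
      rw [show k - (k - i) = i by omega, show k - (k - 1 - i) - 1 = i by omega,
        show (-1 : ℂ) ^ (i + i + 1) = -1 from Odd.neg_one_pow ⟨i, by ring⟩]
      simp
    · rw [if_neg he, if_neg (show ¬((k - 1 - i) % 2 = 0) by omega)]
      simp
  · rw [if_neg hij, if_neg (show ¬(k - 1 - i = k - 1 - j) by omega)]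
    by_cases hc : (j = i + 1 ∧ i % 2 = 1) ∨ (i = j + 1 ∧ j % 2 = 1)
    · rw [if_pos hc,
        if_pos (show (k - 1 - j = (k - 1 - i) + 1 ∧ (k - 1 - i) % 2 = 0)
          ∨ (k - 1 - i = (k - 1 - j) + 1 ∧ (k - 1 - j) % 2 = 0) by omega),
        show (-1 : ℂ) ^ (i + j + 1) = 1 from Even.neg_one_pow (Nat.even_iff.mpr (by omega))]
      simp
    · rw [if_neg hc,
        if_neg (show ¬((k - 1 - j = (k - 1 - i) + 1 ∧ (k - 1 - i) % 2 = 0)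
          ∨ (k - 1 - i = (k - 1 - j) + 1 ∧ (k - 1 - j) % 2 = 0)) by omega)]
      simp

lemma B0 (hk : Odd k) (A : ℕ → Mat n) (i j : ℕ) (hi : i < k) (hj : j < k) :
    T0Block k (fun m => A (k - m)) i j
      = (-1 : ℂ) ^ (i + j + 1) • T1Block k A (k - 1 - i) (k - 1 - j) := by
  have hk1 := Nat.odd_iff.mp hk
  unfold T1Block T0Block
  by_cases hij : i = j
  · subst hij
    rw [if_pos rfl, if_pos rfl]
    by_cases he : i % 2 = 0
    · rw [if_pos he, if_pos (show (k - 1 - i) % 2 = 0 by omega)]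
      simp only
      rw [show k - (k - i - 1) = i + 1 by omega, show k - (k - 1 - i) = i + 1 by omega,
        show (-1 : ℂ) ^ (i + i + 1) = -1 from Odd.neg_one_pow ⟨i, by ring⟩]
      simp
    · rw [if_neg he, if_neg (show ¬((k - 1 - i) % 2 = 0) by omega)]
      simp
  · rw [if_neg hij, if_neg (show ¬(k - 1 - i = k - 1 - j) by omega)]
    by_cases hc : (j = i + 1 ∧ i % 2 = 0) ∨ (i = j + 1 ∧ j % 2 = 0)
    · rw [if_pos hc,
        if_pos (show (k - 1 - j = (k - 1 - i) + 1 ∧ (k - 1 - i) % 2 = 1)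
          ∨ (k - 1 - i = (k - 1 - j) + 1 ∧ (k - 1 - j) % 2 = 1) by omega),
        show (-1 : ℂ) ^ (i + j + 1) = 1 from Even.neg_one_pow (Nat.even_iff.mpr (by omega))]
      simp
    · rw [if_neg hc,
        if_neg (show ¬((k - 1 - j = (k - 1 - i) + 1 ∧ (k - 1 - i) % 2 = 1)
          ∨ (k - 1 - i = (k - 1 - j) + 1 ∧ (k - 1 - j) % 2 = 1)) by omega)]
      simp

lemma TT1_rev (hk : Odd k) (A : ℕ → Mat n) :
    TT1 k (fun i => A (k - i))
      = -((Rmat k n * Dmat k n) * TT0 k A * (Rmat k n * Dmat k n)) := by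
  have hk1 := Nat.odd_iff.mp hk
  ext p q
  have hp := p.1.isLt; have hq := q.1.isLt
  rw [Matrix.neg_apply, conj_apply]
  have key := congrFun (congrFun (B1 hk A p.1.1 q.1.1 hp hq) p.2) q.2
  have hTT0 : (TT0 k A) (flipP p) (flipP q)
      = T0Block k A (k - 1 - p.1.1) (k - 1 - q.1.1) p.2 q.2 := rfl
  show T1Block k (fun i => A (k - i)) p.1.1 q.1.1 p.2 q.2 = _
  rw [key, hTT0, Matrix.smul_apply, smul_eq_mul,
    show (-1 : ℂ) ^ (k - 1 - p.1.1) = (-1 : ℂ) ^ p.1.1 from neg_one_pow_congr (by omega),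
    pow_succ, pow_add]
  ring

lemma TT0_rev (hk : Odd k) (A : ℕ → Mat n) :
    TT0 k (fun i => A (k - i))
      = -((Rmat k n * Dmat k n) * TT1 k A * (Rmat k n * Dmat k n)) := by
  have hk1 := Nat.odd_iff.mp hk
  ext p q
  have hp := p.1.isLt; have hq := q.1.isLt
  rw [Matrix.neg_apply, conj_apply]
  have key := congrFun (congrFun (B0 hk A p.1.1 q.1.1 hp hq) p.2) q.2
  have hTT1 : (TT1 k A) (flipP p) (flipP q)
      = T1Block k A (k - 1 - p.1.1) (k - 1 - q.1.1) p.2 q.2 := rfl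
  show T0Block k (fun i => A (k - i)) p.1.1 q.1.1 p.2 q.2 = _
  rw [key, hTT1, Matrix.smul_apply, smul_eq_mul,
    show (-1 : ℂ) ^ (k - 1 - p.1.1) = (-1 : ℂ) ^ p.1.1 from neg_one_pow_congr (by omega),
    pow_succ, pow_add]
  ring

lemma pencil_conj (hk : Odd k) (A : ℕ → Mat n) (δ : ℂ) (hδ : δ ≠ 0) :
    Tpencil k (fun i => A (k - i)) δ⁻¹
      = δ⁻¹ • ((Rmat k n * Dmat k n) * Tpencil k A δ * (Rmat k n * Dmat k n)) := by
  unfold Tpencil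
  rw [TT1_rev hk A, TT0_rev hk A]
  rw [Matrix.mul_sub, Matrix.sub_mul, Matrix.mul_smul, Matrix.smul_mul,
    smul_sub, smul_smul, inv_mul_cancel₀ hδ, one_smul]
  module

lemma vecNorm_eq_norm {ι : Type*} [Fintype ι] (x : ι → ℂ) :
    vecNorm x = ‖(WithLp.equiv 2 (ι → ℂ)).symm x‖ := by
  rw [EuclideanSpace.norm_eq]
  rfl

lemma vecNorm_smul {ι : Type*} [Fintype ι] (c : ℂ) (x : ι → ℂ) :
    vecNorm (c • x) = ‖c‖ * vecNorm x := by
  rw [vecNorm_eq_norm, vecNorm_eq_norm,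
    show (WithLp.equiv 2 (ι → ℂ)).symm (c • x) = c • (WithLp.equiv 2 (ι → ℂ)).symm x from rfl,
    norm_smul]

lemma vecNorm_neg {ι : Type*} [Fintype ι] (x : ι → ℂ) : vecNorm (-x) = vecNorm x := by
  rw [← neg_one_smul ℂ x, vecNorm_smul]
  simp

lemma vecNorm_U (hk : Odd k) (z : Fin k × Fin n → ℂ) :
    vecNorm ((Rmat k n * Dmat k n) *ᵥ z) = vecNorm z := by
  have hinv : Function.Involutive (flipP : Fin k × Fin n → Fin k × Fin n) := flipP_flipP
  unfold vecNorm
  congr 1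
  calc ∑ p, ‖((Rmat k n * Dmat k n) *ᵥ z) p‖ ^ 2
      = ∑ p, ‖z (flipP p)‖ ^ 2 := by
        refine Finset.sum_congr rfl fun p _ => ?_
        rw [U_mulVec]
        simp [_root_.map_mul, _root_.map_pow]
    _ = ∑ p, ‖z p‖ ^ 2 :=
        Fintype.sum_equiv hinv.toPerm _ _ (fun p => by simp [Function.Involutive.coe_toPerm])

lemma mulVec_vecNorm_le {ι κ : Type*} [Fintype ι] [Fintype κ] [DecidableEq κ]
    (M : Matrix ι κ ℂ) (v : κ → ℂ) :
    vecNorm (M *ᵥ v) ≤ specNorm M * vecNorm v := by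
  have h := (LinearMap.toContinuousLinearMap (Matrix.toEuclideanLin M)).le_opNorm
      ((WithLp.equiv 2 (κ → ℂ)).symm v)
  rw [vecNorm_eq_norm, vecNorm_eq_norm]
  unfold specNorm
  exact h

lemma specNorm_nonneg {ι κ : Type*} [Fintype ι] [Fintype κ] [DecidableEq κ]
    (M : Matrix ι κ ℂ) : 0 ≤ specNorm M := norm_nonneg _

lemma specNorm_le_bound {ι κ : Type*} [Fintype ι] [Fintype κ] [DecidableEq κ]
    (M : Matrix ι κ ℂ) (C : ℝ) (hC : 0 ≤ C)
    (h : ∀ v, vecNorm (M *ᵥ v) ≤ C * vecNorm v) : specNorm M ≤ C := by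
  unfold specNorm
  refine ContinuousLinearMap.opNorm_le_bound _ hC fun x => ?_
  have h2 := h ((WithLp.equiv 2 (κ → ℂ)) x)
  rw [vecNorm_eq_norm, vecNorm_eq_norm] at h2
  simpa [Matrix.toEuclideanLin_apply] using h2

lemma specNorm_conj_neg (hk : Odd k) (M : Matrix (Fin k × Fin n) (Fin k × Fin n) ℂ) :
    specNorm (-((Rmat k n * Dmat k n) * M * (Rmat k n * Dmat k n))) = specNorm M := by
  apply le_antisymm
  · refine specNorm_le_bound _ _ (specNorm_nonneg M) fun v => ?_
    have h1 : (-((Rmat k n * Dmat k n) * M * (Rmat k n * Dmat k n))) *ᵥ v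
        = -((Rmat k n * Dmat k n) *ᵥ (M *ᵥ ((Rmat k n * Dmat k n) *ᵥ v))) := by
      rw [Matrix.neg_mulVec, ← Matrix.mulVec_mulVec, ← Matrix.mulVec_mulVec]
    rw [h1, vecNorm_neg, vecNorm_U hk]
    calc vecNorm (M *ᵥ ((Rmat k n * Dmat k n) *ᵥ v))
        ≤ specNorm M * vecNorm ((Rmat k n * Dmat k n) *ᵥ v) := mulVec_vecNorm_le _ _
      _ = specNorm M * vecNorm v := by rw [vecNorm_U hk]
  · refine specNorm_le_bound _ _ (specNorm_nonneg _) fun v => ?_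
    have h1 : (-((Rmat k n * Dmat k n) * M * (Rmat k n * Dmat k n)))
          *ᵥ ((Rmat k n * Dmat k n) *ᵥ v)
        = -((Rmat k n * Dmat k n) *ᵥ (M *ᵥ v)) := by
      rw [Matrix.neg_mulVec, ← Matrix.mulVec_mulVec, ← Matrix.mulVec_mulVec,
        U_mulVec_mulVec hk]
    have h2 : vecNorm (M *ᵥ v)
        = vecNorm ((-((Rmat k n * Dmat k n) * M * (Rmat k n * Dmat k n)))
            *ᵥ ((Rmat k n * Dmat k n) *ᵥ v)) := by
      rw [h1, vecNorm_neg, vecNorm_U hk]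
    rw [h2]
    calc vecNorm _
        ≤ specNorm (-((Rmat k n * Dmat k n) * M * (Rmat k n * Dmat k n)))
            * vecNorm ((Rmat k n * Dmat k n) *ᵥ v) := mulVec_vecNorm_le _ _
      _ = _ := by rw [vecNorm_U hk]

end Aux15


theorem stmt_15 {n k : ℕ} (hk : Odd k) (hk3 : 3 ≤ k) (A : ℕ → Mat n)
    (hAk : A k ≠ 0) (hA0 : A 0 ≠ 0)
    (δ : ℂ) (hδ : δ ≠ 0) (z : Fin k × Fin n → ℂ) (hz : z ≠ 0) :
    vecNorm (Tpencil k A δ *ᵥ z)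
        / ((‖δ‖ * specNorm (TT1 k A) + specNorm (TT0 k A)) * vecNorm z)
      = vecNorm (Tpencil k (fun i => A (k - i)) δ⁻¹ *ᵥ ((Rmat k n * Dmat k n) *ᵥ z))
          / ((‖δ⁻¹‖ * specNorm (TT1 k (fun i => A (k - i)))
                + specNorm (TT0 k (fun i => A (k - i))))
              * vecNorm ((Rmat k n * Dmat k n) *ᵥ z)) := by
  have habs : (0 : ℝ) < ‖δ‖ := by
    simpa [norm_pos_iff] using hδ
  rw [pencil_conj hk A δ hδ, Matrix.smul_mulVec, vecNorm_smul, norm_inv,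
    ← Matrix.mulVec_mulVec, U_mulVec_mulVec hk, ← Matrix.mulVec_mulVec, vecNorm_U hk,
    TT1_rev hk A, TT0_rev hk A, specNorm_conj_neg hk, specNorm_conj_neg hk,
    vecNorm_U hk]
  rw [show ((‖δ‖)⁻¹ * specNorm (TT0 k A) + specNorm (TT1 k A)) * vecNorm z
      = (‖δ‖)⁻¹
          * ((‖δ‖ * specNorm (TT1 k A) + specNorm (TT0 k A)) * vecNorm z) from by
    have hcancel : (‖δ‖)⁻¹ * ‖δ‖ = 1 := inv_mul_cancel₀ habs.ne'
    linear_combination (-(specNorm (TT1 k A) * vecNorm z)) * hcancel]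
  rw [mul_div_mul_left _ _ (inv_ne_zero habs.ne')]

end MPoly
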